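/- For a unit vector n, define H_n(Q) = ψ₁(nn − I/3)(nn:Q) + ψ₂(−Q + nn·Q + Q·nn − (2/3)I(nn:Q)) on symmetric traceless matrices Q, where ψ₁, ψ₂ are real constants. Then H_n vanishes on the subspace Q_n^in = {np + pn : p ⊥ n} and maps every symmetric traceless Q into the orthogonal complement Q_n^out of Q_n^in. -/
import Mathlib


open Matrix

/-- Frobenius inner product of 3×3 matrices. -/
def frob (A B : Matrix (Fin 3) (Fin 3) ℝ) : ℝ := ∑ i, ∑ j, A i j * B i j

/-- `H_n(Q) = ψ₁(nn − I/3)(nn:Q) + ψ₂(−Q + nn·Q + Q·nn − (2/3)I(nn:Q))`. -/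
noncomputable def Hn (ψ₁ ψ₂ : ℝ) (n : Fin 3 → ℝ)
    (Q : Matrix (Fin 3) (Fin 3) ℝ) : Matrix (Fin 3) (Fin 3) ℝ :=
  (ψ₁ * frob (vecMulVec n n) Q) • (vecMulVec n n - (1 / 3 : ℝ) • (1 : Matrix (Fin 3) (Fin 3) ℝ)) +
  ψ₂ • (-Q + vecMulVec n n * Q + Q * vecMulVec n n -
    ((2 / 3 : ℝ) * frob (vecMulVec n n) Q) • (1 : Matrix (Fin 3) (Fin 3) ℝ))

set_option maxHeartbeats 2000000 in
lemma Hn_apply (ψ₁ ψ₂ : ℝ) (n : Fin 3 → ℝ) (Q : Matrix (Fin 3) (Fin 3) ℝ) (i j : Fin 3) :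
    Hn ψ₁ ψ₂ n Q i j =
      (ψ₁ * (n 0 * (Q 0 0 * n 0 + Q 0 1 * n 1 + Q 0 2 * n 2)
        + n 1 * (Q 1 0 * n 0 + Q 1 1 * n 1 + Q 1 2 * n 2)
        + n 2 * (Q 2 0 * n 0 + Q 2 1 * n 1 + Q 2 2 * n 2))) *
        (n i * n j - (1 / 3) * (if i = j then 1 else 0)) +
      ψ₂ * (-Q i j + n i * (n 0 * Q 0 j + n 1 * Q 1 j + n 2 * Q 2 j)
        + (Q i 0 * n 0 + Q i 1 * n 1 + Q i 2 * n 2) * n j -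
        ((2 / 3) * (n 0 * (Q 0 0 * n 0 + Q 0 1 * n 1 + Q 0 2 * n 2)
          + n 1 * (Q 1 0 * n 0 + Q 1 1 * n 1 + Q 1 2 * n 2)
          + n 2 * (Q 2 0 * n 0 + Q 2 1 * n 1 + Q 2 2 * n 2))) * (if i = j then 1 else 0)) := by
  simp only [Hn, frob, vecMulVec_apply, Matrix.mul_apply, Matrix.one_apply,
    Fin.sum_univ_three, Matrix.add_apply, Matrix.sub_apply, Matrix.neg_apply,
    Matrix.smul_apply, smul_eq_mul]
  ring

set_option maxHeartbeats 2000000 in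
set_option maxRecDepth 4000 in
/-- `H_n` vanishes on `Q_n^in = {np + pn : p ⊥ n}` and maps every symmetric
traceless matrix into its orthogonal complement `Q_n^out`. -/
theorem Hn_ker_and_range (ψ₁ ψ₂ : ℝ) (n : Fin 3 → ℝ) (hn : ∑ i, n i ^ 2 = 1) :
    (∀ p : Fin 3 → ℝ, (∑ i, p i * n i = 0) →
      Hn ψ₁ ψ₂ n (vecMulVec n p + vecMulVec p n) = 0) ∧
    (∀ Q : Matrix (Fin 3) (Fin 3) ℝ, Q.IsSymm → Q.trace = 0 →
      ∀ p : Fin 3 → ℝ, (∑ i, p i * n i = 0) →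
        frob (Hn ψ₁ ψ₂ n Q) (vecMulVec n p + vecMulVec p n) = 0) := by
  simp only [Fin.sum_univ_three] at hn
  constructor
  · intro p hp
    simp only [Fin.sum_univ_three] at hp
    ext i j
    simp only [Hn, frob, vecMulVec_apply, Matrix.mul_apply, Matrix.one_apply,
      Fin.sum_univ_three, Matrix.add_apply, Matrix.sub_apply, Matrix.neg_apply,
      Matrix.smul_apply, Matrix.zero_apply, smul_eq_mul]
    set δ : ℝ := if i = j then 1 else 0 with hδ
    set B : ℝ := p 0 * n 0 + p 1 * n 1 + p 2 * n 2 with hB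
    linear_combination
      (2*ψ₁*B*(n i * n j - δ/3) + ψ₂*(n i * p j + p i * n j) - (4/3)*ψ₂*B*δ) * hn +
      (2*ψ₁*(n i * n j - δ/3) + 2*ψ₂*(n i * n j) - (4/3)*ψ₂*δ) * hp
  · intro Q _ _ p hp
    simp only [Fin.sum_univ_three] at hp
    simp only [frob, Hn_apply, vecMulVec_apply, Matrix.add_apply, Fin.sum_univ_three]
    norm_num [Fin.ext_iff]
    set A : ℝ := n 0 ^ 2 + n 1 ^ 2 + n 2 ^ 2 with hA
    set F : ℝ := n 0 * (Q 0 0 * n 0 + Q 0 1 * n 1 + Q 0 2 * n 2)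
      + n 1 * (Q 1 0 * n 0 + Q 1 1 * n 1 + Q 1 2 * n 2)
      + n 2 * (Q 2 0 * n 0 + Q 2 1 * n 1 + Q 2 2 * n 2) with hF
    set C1 : ℝ := n 0 * (Q 0 0 * p 0 + Q 0 1 * p 1 + Q 0 2 * p 2)
      + n 1 * (Q 1 0 * p 0 + Q 1 1 * p 1 + Q 1 2 * p 2)
      + n 2 * (Q 2 0 * p 0 + Q 2 1 * p 1 + Q 2 2 * p 2) with hC1
    set C2 : ℝ := p 0 * (Q 0 0 * n 0 + Q 0 1 * n 1 + Q 0 2 * n 2)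
      + p 1 * (Q 1 0 * n 0 + Q 1 1 * n 1 + Q 1 2 * n 2)
      + p 2 * (Q 2 0 * n 0 + Q 2 1 * n 1 + Q 2 2 * n 2) with hC2
    linear_combination (ψ₂*(C1+C2)) * hn + (ψ₁*F*(2*A - 2/3) + (2/3)*ψ₂*F) * hp
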